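/- Let d and n be positive integers, let p = (p_m)_{m∈𝓜} be a probability vector on 𝓜 = {0,1}^d, and let τ be a real number with τ ≥ 1/n. Let M_1, …, M_n be i.i.d. random elements of 𝓜 with distribution p, and for each m ∈ 𝓜 let N_m = #{ i ∈ {1,…,n} : M_i = m }. Then E[ ∑_{m∈𝓜} p_m·( d·1_{N_m > nτ}/N_m + 1_{N_m ≤ nτ} ) ] ≤ 5·max(1, d/(n·τ))·𝔠_p(τ). -/

import Mathlib

set_option maxHeartbeats 1000000

open MeasureTheory ProbabilityTheory Finset

lemma intg_of_bound {Ω : Type*} [MeasurableSpace Ω] (μ : Measure Ω) [IsProbabilityMeasure μ]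
    (f : Ω → ℝ) (hf : Measurable f) (C : ℝ) (hC : ∀ ω, |f ω| ≤ C) : Integrable f μ :=
  Integrable.mono' (integrable_const C) hf.aestronglyMeasurable (ae_of_all _ hC)

lemma aux_inv_succ {Ω : Type*} [MeasurableSpace Ω] (μ : Measure Ω) [IsProbabilityMeasure μ]
    {n : ℕ} (X : Fin n → Ω → ℝ) (hX : ∀ i, Measurable (X i))
    (hX01 : ∀ i ω, X i ω = 0 ∨ X i ω = 1)
    (hind : iIndepFun X μ)
    (q : ℝ) (hEX : ∀ i, ∫ ω, X i ω ∂μ = q) :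
    (n : ℝ) * q * ∫ ω, (∑ i, X i ω + 1)⁻¹ ∂μ ≤ 1 := by
  rcases Nat.eq_zero_or_pos n with hn | hn
  · subst hn; simp
  have hX0 : ∀ i ω, 0 ≤ X i ω := fun i ω => by rcases hX01 i ω with h | h <;> rw [h] <;> norm_num
  have hX1 : ∀ i ω, X i ω ≤ 1 := fun i ω => by rcases hX01 i ω with h | h <;> rw [h] <;> norm_num
  set S : Ω → ℝ := fun ω => ∑ i, X i ω with hSdef
  have hSm : Measurable S := Finset.measurable_sum _ (fun i _ => hX i)
  have hS0 : ∀ ω, 0 ≤ S ω := fun ω => Finset.sum_nonneg (fun i _ => hX0 i ω)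
  have hXS : ∀ j ω, X j ω ≤ S ω := fun j ω =>
    Finset.single_le_sum (fun i _ => hX0 i ω) (mem_univ j)
  have hq0 : 0 ≤ q := by
    rw [← hEX ⟨0, hn⟩]; exact integral_nonneg (fun ω => hX0 _ _)
  have int_invS : Integrable (fun ω => (S ω + 1)⁻¹) μ := by
    refine intg_of_bound μ _ ((hSm.add_const 1).inv) 1 (fun ω => ?_)
    rw [abs_of_nonneg (inv_nonneg.mpr (by linarith [hS0 ω]))]
    rw [inv_le_one_iff₀]; right; linarith [hS0 ω]
  have int_XS : ∀ j, Integrable (fun ω => X j ω * (S ω)⁻¹) μ := by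
    intro j
    refine intg_of_bound μ _ ((hX j).mul hSm.inv) 1 (fun ω => ?_)
    rw [abs_of_nonneg (mul_nonneg (hX0 j ω) (inv_nonneg.mpr (hS0 ω)))]
    rcases eq_or_lt_of_le (hS0 ω) with h | h
    · rw [← h]; norm_num
    · calc X j ω * (S ω)⁻¹ ≤ S ω * (S ω)⁻¹ :=
            mul_le_mul_of_nonneg_right (hXS j ω) (inv_nonneg.mpr (hS0 ω))
        _ = 1 := mul_inv_cancel₀ (ne_of_gt h)
  have key : ∀ j : Fin n, q * ∫ ω, (S ω + 1)⁻¹ ∂μ ≤ ∫ ω, X j ω * (S ω)⁻¹ ∂μ := by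
    intro j
    set T : Ω → ℝ := fun ω => ∑ i ∈ univ.erase j, X i ω with hTdef
    have hTm : Measurable T := Finset.measurable_sum _ (fun i _ => hX i)
    have hT0 : ∀ ω, 0 ≤ T ω := fun ω => Finset.sum_nonneg (fun i _ => hX0 i ω)
    have hTS : ∀ ω, T ω + X j ω = S ω := fun ω => Finset.sum_erase_add _ _ (mem_univ j)
    have int_invT : Integrable (fun ω => (T ω + 1)⁻¹) μ := by
      refine intg_of_bound μ _ ((hTm.add_const 1).inv) 1 (fun ω => ?_)
      rw [abs_of_nonneg (inv_nonneg.mpr (by linarith [hT0 ω]))]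
      rw [inv_le_one_iff₀]; right; linarith [hT0 ω]
    have step1 : ∫ ω, (S ω + 1)⁻¹ ∂μ ≤ ∫ ω, (T ω + 1)⁻¹ ∂μ := by
      refine integral_mono int_invS int_invT (fun ω => ?_)
      have h1 : (0:ℝ) < T ω + 1 := by linarith [hT0 ω]
      have h2 : T ω + 1 ≤ S ω + 1 := by
        have := hTS ω; have := hX0 j ω; linarith
      exact inv_anti₀ h1 h2
    have hTX : IndepFun (fun ω => (T ω + 1)⁻¹) (X j) μ := by
      have h1 : IndepFun (∑ i ∈ univ.erase j, X i) (X j) μ :=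
        hind.indepFun_finsetSum_of_notMem hX (Finset.notMem_erase _ _)
      have h2 := h1.comp (φ := fun x : ℝ => (x + 1)⁻¹) (ψ := id)
        ((measurable_id.add_const 1).inv) measurable_id
      convert h2 using 2 with ω
      all_goals simp [hTdef, Function.comp, Finset.sum_apply]
    have step2 : ∫ ω, X j ω * (T ω + 1)⁻¹ ∂μ = q * ∫ ω, (T ω + 1)⁻¹ ∂μ := by
      have := hTX.symm.integral_mul_eq_mul_integral
        (intg_of_bound μ _ (hX j) 1 (fun ω => by
          rw [abs_of_nonneg (hX0 j ω)]; exact hX1 j ω)).aestronglyMeasurable int_invT.aestronglyMeasurable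
      rw [← hEX j]
      simpa using this
    have step3 : ∀ ω, X j ω * (T ω + 1)⁻¹ = X j ω * (S ω)⁻¹ := by
      intro ω
      rcases hX01 j ω with h | h
      · rw [h]; ring
      · have : T ω + 1 = S ω := by rw [← hTS ω, h]
        rw [this]
    calc q * ∫ ω, (S ω + 1)⁻¹ ∂μ ≤ q * ∫ ω, (T ω + 1)⁻¹ ∂μ :=
          mul_le_mul_of_nonneg_left step1 hq0
      _ = ∫ ω, X j ω * (T ω + 1)⁻¹ ∂μ := step2.symm
      _ = ∫ ω, X j ω * (S ω)⁻¹ ∂μ := integral_congr_ae (ae_of_all _ step3)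
  have main : (n : ℝ) * q * ∫ ω, (S ω + 1)⁻¹ ∂μ ≤ ∫ ω, S ω * (S ω)⁻¹ ∂μ := by
    have h1 : (n : ℝ) * q * ∫ ω, (S ω + 1)⁻¹ ∂μ
        = ∑ _j : Fin n, q * ∫ ω, (S ω + 1)⁻¹ ∂μ := by
      rw [Finset.sum_const, card_univ, Fintype.card_fin, nsmul_eq_mul]; ring
    rw [h1]
    calc ∑ j : Fin n, q * ∫ ω, (S ω + 1)⁻¹ ∂μ
        ≤ ∑ j : Fin n, ∫ ω, X j ω * (S ω)⁻¹ ∂μ := Finset.sum_le_sum (fun j _ => key j)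
      _ = ∫ ω, ∑ j : Fin n, X j ω * (S ω)⁻¹ ∂μ :=
          (integral_finset_sum _ (fun j _ => int_XS j)).symm
      _ = ∫ ω, S ω * (S ω)⁻¹ ∂μ := by
          refine integral_congr_ae (ae_of_all _ (fun ω => ?_))
          show (∑ j : Fin n, X j ω * (S ω)⁻¹) = S ω * (S ω)⁻¹
          rw [← Finset.sum_mul]
  refine main.trans ?_
  calc ∫ ω, S ω * (S ω)⁻¹ ∂μ ≤ ∫ _ω, (1:ℝ) ∂μ := by
        refine integral_mono (by
          refine intg_of_bound μ _ (hSm.mul hSm.inv) 1 (fun ω => ?_)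
          rcases eq_or_lt_of_le (hS0 ω) with h | h
          · rw [← h]; norm_num
          · rw [mul_inv_cancel₀ (ne_of_gt h)]; norm_num) (integrable_const 1)
          (fun ω => ?_)
        rcases eq_or_lt_of_le (hS0 ω) with h | h
        · rw [← h]; norm_num
        · rw [mul_inv_cancel₀ (ne_of_gt h)]
    _ = 1 := by simp

lemma aux_var {Ω : Type*} [MeasurableSpace Ω] (μ : Measure Ω) [IsProbabilityMeasure μ]
    {n : ℕ} (X : Fin n → Ω → ℝ) (hX : ∀ i, Measurable (X i))
    (hX01 : ∀ i ω, X i ω = 0 ∨ X i ω = 1)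
    (hind : iIndepFun X μ)
    (q : ℝ) (hEX : ∀ i, ∫ ω, X i ω ∂μ = q) :
    ∫ ω, (∑ i, X i ω - (n : ℝ) * q) ^ 2 ∂μ ≤ (n : ℝ) * q := by
  rcases Nat.eq_zero_or_pos n with hn | hn
  · subst hn; simp
  have hX0 : ∀ i ω, 0 ≤ X i ω := fun i ω => by rcases hX01 i ω with h | h <;> simp [h]
  have hX1 : ∀ i ω, X i ω ≤ 1 := fun i ω => by rcases hX01 i ω with h | h <;> simp [h]
  have hq0 : 0 ≤ q := by
    rw [← hEX ⟨0, hn⟩]; exact integral_nonneg (fun ω => hX0 _ _)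
  have hq1 : q ≤ 1 := by
    rw [← hEX ⟨0, hn⟩]
    calc ∫ ω, X ⟨0, hn⟩ ω ∂μ ≤ ∫ _ω, (1:ℝ) ∂μ :=
          integral_mono (intg_of_bound μ _ (hX _) 1 (fun ω => by
            rw [abs_of_nonneg (hX0 _ ω)]; exact hX1 _ ω)) (integrable_const 1)
            (fun ω => hX1 _ ω)
      _ = 1 := by simp
  have habs : ∀ i ω, |X i ω - q| ≤ 1 := fun i ω => by
    rw [abs_le]; constructor <;> [linarith [hX0 i ω]; linarith [hX1 i ω]]
  have int_prod : ∀ i j : Fin n, Integrable (fun ω => (X i ω - q) * (X j ω - q)) μ := by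
    intro i j
    refine intg_of_bound μ _ (((hX i).sub_const q).mul ((hX j).sub_const q)) 1 (fun ω => ?_)
    rw [abs_mul]
    exact mul_le_one₀ (habs i ω) (abs_nonneg _) (habs j ω)
  have int_sub : ∀ i : Fin n, Integrable (fun ω => X i ω - q) μ := by
    intro i
    exact (intg_of_bound μ _ (hX i) 1 (fun ω => by
      rw [abs_of_nonneg (hX0 i ω)]; exact hX1 i ω)).sub (integrable_const q)
  have hEsub : ∀ i : Fin n, ∫ ω, (X i ω - q) ∂μ = 0 := by
    intro i
    rw [integral_sub (intg_of_bound μ _ (hX i) 1 (fun ω => by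
      rw [abs_of_nonneg (hX0 i ω)]; exact hX1 i ω)) (integrable_const q)]
    simp [hEX i]
  -- pointwise expansion
  have hpt : ∀ ω, (∑ i, X i ω - (n : ℝ) * q) ^ 2
      = ∑ i : Fin n, ∑ j : Fin n, (X i ω - q) * (X j ω - q) := by
    intro ω
    have h1 : ∑ i, X i ω - (n : ℝ) * q = ∑ i : Fin n, (X i ω - q) := by
      rw [Finset.sum_sub_distrib, Finset.sum_const, card_univ, Fintype.card_fin, nsmul_eq_mul]
    rw [h1, sq, Finset.sum_mul_sum]
  rw [integral_congr_ae (ae_of_all _ hpt)]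
  rw [integral_finset_sum _ (fun i _ => integrable_finset_sum _ (fun j _ => int_prod i j))]
  have hrow : ∀ i : Fin n, ∫ ω, ∑ j : Fin n, (X i ω - q) * (X j ω - q) ∂μ ≤ q := by
    intro i
    rw [integral_finset_sum _ (fun j _ => int_prod i j)]
    have hoff : ∀ j : Fin n, j ≠ i → ∫ ω, (X i ω - q) * (X j ω - q) ∂μ = 0 := by
      intro j hji
      have hIJ : IndepFun (X i) (X j) μ := hind.indepFun (Ne.symm hji)
      have hc := hIJ.comp (φ := fun x : ℝ => x - q) (ψ := fun x : ℝ => x - q)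
        (measurable_id.sub_const q) (measurable_id.sub_const q)
      have := hc.integral_mul_eq_mul_integral (int_sub i).aestronglyMeasurable (int_sub j).aestronglyMeasurable
      have e3 : ((fun x : ℝ => x - q) ∘ X i * (fun x : ℝ => x - q) ∘ X j)
          = fun ω => (X i ω - q) * (X j ω - q) := rfl
      have e1 : ((fun x : ℝ => x - q) ∘ X i) = fun ω => X i ω - q := rfl
      have e2 : ((fun x : ℝ => x - q) ∘ X j) = fun ω => X j ω - q := rfl
      rw [e3, e1, e2] at this
      rw [this, hEsub i, hEsub j, mul_zero]
    have hdiag : ∫ ω, (X i ω - q) * (X i ω - q) ∂μ ≤ q := by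
      have hpt2 : ∀ ω, (X i ω - q) * (X i ω - q) = (1 - 2*q) * X i ω + q^2 := by
        intro ω
        rcases hX01 i ω with h | h <;> rw [h] <;> ring
      rw [integral_congr_ae (ae_of_all _ hpt2)]
      rw [integral_add ((intg_of_bound μ _ (hX i) 1 (fun ω => by
        rw [abs_of_nonneg (hX0 i ω)]; exact hX1 i ω)).const_mul _) (integrable_const _)]
      rw [integral_const_mul, hEX i]
      simp only [integral_const, measure_univ, probReal_univ, ENNReal.toReal_one, smul_eq_mul, one_mul]
      nlinarith
    calc ∑ j : Fin n, ∫ ω, (X i ω - q) * (X j ω - q) ∂μ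
        = ∫ ω, (X i ω - q) * (X i ω - q) ∂μ :=
          Finset.sum_eq_single_of_mem i (mem_univ i) (fun j _ hji => hoff j hji)
      _ ≤ q := hdiag
  calc ∑ i : Fin n, ∫ ω, ∑ j : Fin n, (X i ω - q) * (X j ω - q) ∂μ
      ≤ ∑ _i : Fin n, q := Finset.sum_le_sum (fun i _ => hrow i)
    _ = (n : ℝ) * q := by rw [Finset.sum_const, card_univ, Fintype.card_fin, nsmul_eq_mul]

lemma per_pattern {Ω : Type*} [MeasurableSpace Ω] (μ : Measure Ω) [IsProbabilityMeasure μ]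
    {n : ℕ} (d : ℕ) (hn : 0 < n) (τ : ℝ) (hτ : 1 / (n : ℝ) ≤ τ)
    (X : Fin n → Ω → ℝ) (hX : ∀ i, Measurable (X i))
    (hX01 : ∀ i ω, X i ω = 0 ∨ X i ω = 1)
    (hind : iIndepFun X μ)
    (q : ℝ) (hEX : ∀ i, ∫ ω, X i ω ∂μ = q) :
    q * ∫ ω, ((if (n : ℝ) * τ < ∑ i, X i ω then (d : ℝ) / ∑ i, X i ω else 0) +
        (if (∑ i, X i ω) ≤ (n : ℝ) * τ then 1 else 0)) ∂μ ≤
      5 * max 1 ((d : ℝ) / ((n : ℝ) * τ)) * min q τ := by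
  have hn' : (0:ℝ) < n := Nat.cast_pos.mpr hn
  have hτ0 : (0:ℝ) < τ := lt_of_lt_of_le (by positivity) hτ
  have hnτ : 1 ≤ (n : ℝ) * τ := by
    rw [div_le_iff₀ hn'] at hτ; linarith
  have hnτ0 : (0:ℝ) < (n : ℝ) * τ := by linarith
  set c := max 1 ((d : ℝ) / ((n : ℝ) * τ)) with hc
  have hc1 : 1 ≤ c := le_max_left _ _
  have hc0 : (0:ℝ) < c := by linarith
  have hcd : (d : ℝ) / ((n : ℝ) * τ) ≤ c := le_max_right _ _
  have hd0 : (0:ℝ) ≤ d := Nat.cast_nonneg d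
  have hX0 : ∀ i ω, 0 ≤ X i ω := fun i ω => by rcases hX01 i ω with h | h <;> simp [h]
  have hX1 : ∀ i ω, X i ω ≤ 1 := fun i ω => by rcases hX01 i ω with h | h <;> simp [h]
  have hq0 : 0 ≤ q := by
    rw [← hEX ⟨0, hn⟩]; exact integral_nonneg (fun ω => hX0 _ _)
  have hSm : Measurable (fun ω => ∑ i, X i ω) := Finset.measurable_sum _ (fun i _ => hX i)
  have hS0 : ∀ ω, (0:ℝ) ≤ ∑ i, X i ω := fun ω => Finset.sum_nonneg (fun i _ => hX0 i ω)
  have hSn : ∀ ω, (∑ i, X i ω) ≤ n := by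
    intro ω
    calc (∑ i, X i ω) ≤ ∑ _i : Fin n, (1:ℝ) := Finset.sum_le_sum (fun i _ => hX1 i ω)
      _ = n := by simp
  have hAm : Measurable (fun ω => if (n : ℝ) * τ < ∑ i, X i ω then (d : ℝ) / ∑ i, X i ω else 0) :=
    Measurable.ite (measurableSet_lt measurable_const hSm) (measurable_const.div hSm)
      measurable_const
  have hBm : Measurable (fun ω => if (∑ i, X i ω) ≤ (n : ℝ) * τ then (1:ℝ) else 0) :=
    Measurable.ite (measurableSet_le hSm measurable_const) measurable_const measurable_const
  have hA0 : ∀ ω, 0 ≤ (if (n : ℝ) * τ < ∑ i, X i ω then (d : ℝ) / ∑ i, X i ω else 0) := by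
    intro ω; split_ifs with h
    · exact div_nonneg hd0 (hS0 ω)
    · exact le_rfl
  have hAd : ∀ ω, (if (n : ℝ) * τ < ∑ i, X i ω then (d : ℝ) / ∑ i, X i ω else 0) ≤ d := by
    intro ω; split_ifs with h
    · exact div_le_self hd0 (le_trans hnτ h.le)
    · exact hd0
  have hB0 : ∀ ω, 0 ≤ (if (∑ i, X i ω) ≤ (n : ℝ) * τ then (1:ℝ) else 0) := by
    intro ω; split_ifs <;> norm_num
  have hB1 : ∀ ω, (if (∑ i, X i ω) ≤ (n : ℝ) * τ then (1:ℝ) else 0) ≤ 1 := by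
    intro ω; split_ifs <;> norm_num
  have int_A : Integrable
      (fun ω => if (n : ℝ) * τ < ∑ i, X i ω then (d : ℝ) / ∑ i, X i ω else 0) μ := by
    refine intg_of_bound μ _ hAm d (fun ω => ?_)
    rw [abs_of_nonneg (hA0 ω)]; exact hAd ω
  have int_B : Integrable (fun ω => if (∑ i, X i ω) ≤ (n : ℝ) * τ then (1:ℝ) else 0) μ := by
    refine intg_of_bound μ _ hBm 1 (fun ω => ?_)
    rw [abs_of_nonneg (hB0 ω)]; exact hB1 ω
  rcases le_or_gt q τ with hcase | hcase
  · -- small q: crude pointwise bound by c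
    have hmin : min q τ = q := min_eq_left hcase
    have hfc : ∀ ω, (if (n : ℝ) * τ < ∑ i, X i ω then (d : ℝ) / ∑ i, X i ω else 0) +
        (if (∑ i, X i ω) ≤ (n : ℝ) * τ then (1:ℝ) else 0) ≤ c := by
      intro ω
      by_cases h : (n : ℝ) * τ < ∑ i, X i ω
      · rw [if_pos h, if_neg (not_le.mpr h), add_zero]
        calc (d : ℝ) / ∑ i, X i ω ≤ (d : ℝ) / ((n : ℝ) * τ) := by gcongr
          _ ≤ c := hcd
      · rw [if_neg h, if_pos (not_lt.mp h), zero_add]; exact hc1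
    have h₁ : ∫ ω, ((if (n : ℝ) * τ < ∑ i, X i ω then (d : ℝ) / ∑ i, X i ω else 0) +
        (if (∑ i, X i ω) ≤ (n : ℝ) * τ then (1:ℝ) else 0)) ∂μ ≤ c := by
      calc _ ≤ ∫ _ω, c ∂μ := integral_mono (int_A.add int_B) (integrable_const c) hfc
        _ = c := by simp
    have h₂ : 0 ≤ ∫ ω, ((if (n : ℝ) * τ < ∑ i, X i ω then (d : ℝ) / ∑ i, X i ω else 0) +
        (if (∑ i, X i ω) ≤ (n : ℝ) * τ then (1:ℝ) else 0)) ∂μ :=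
      integral_nonneg (fun ω => add_nonneg (hA0 ω) (hB0 ω))
    rw [hmin]
    nlinarith [mul_le_mul_of_nonneg_left h₁ hq0]
  · -- large q
    have hmin : min q τ = τ := min_eq_right hcase.le
    have hqpos : 0 < q := lt_trans hτ0 hcase
    rw [hmin, integral_add int_A int_B, mul_add]
    -- Part A
    have hinvm : Measurable (fun ω => (∑ i, X i ω + 1)⁻¹) := (hSm.add_const 1).inv
    have int_inv : Integrable (fun ω => (∑ i, X i ω + 1)⁻¹) μ := by
      refine intg_of_bound μ _ hinvm 1 (fun ω => ?_)
      rw [abs_of_nonneg (inv_nonneg.mpr (by linarith [hS0 ω]))]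
      rw [inv_le_one_iff₀]; right; linarith [hS0 ω]
    have hIinv0 : 0 ≤ ∫ ω, (∑ i, X i ω + 1)⁻¹ ∂μ :=
      integral_nonneg (fun ω => inv_nonneg.mpr (by linarith [hS0 ω]))
    have hA2 : ∀ ω, (if (n : ℝ) * τ < ∑ i, X i ω then (d : ℝ) / ∑ i, X i ω else 0)
        ≤ 2 * d * (∑ i, X i ω + 1)⁻¹ := by
      intro ω
      by_cases h : (n : ℝ) * τ < ∑ i, X i ω
      · rw [if_pos h]
        have h1 : (1:ℝ) ≤ ∑ i, X i ω := le_trans hnτ h.le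
        have h2 : (0:ℝ) < ∑ i, X i ω := by linarith
        rw [show 2 * (d:ℝ) * (∑ i, X i ω + 1)⁻¹ = 2 * d / (∑ i, X i ω + 1) from
          (div_eq_mul_inv _ _).symm]
        rw [div_le_div_iff₀ h2 (by linarith)]
        nlinarith
      · rw [if_neg h]
        have := hS0 ω
        positivity
    have hIA : ∫ ω, (if (n : ℝ) * τ < ∑ i, X i ω then (d : ℝ) / ∑ i, X i ω else 0) ∂μ
        ≤ 2 * d * ∫ ω, (∑ i, X i ω + 1)⁻¹ ∂μ := by
      calc _ ≤ ∫ ω, 2 * d * (∑ i, X i ω + 1)⁻¹ ∂μ :=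
            integral_mono int_A (int_inv.const_mul _) hA2
        _ = 2 * d * ∫ ω, (∑ i, X i ω + 1)⁻¹ ∂μ := integral_const_mul _ _
    have hkeyA := aux_inv_succ μ X hX hX01 hind q hEX
    have hqI : q * ∫ ω, (∑ i, X i ω + 1)⁻¹ ∂μ ≤ 1 / n := by
      rw [le_div_iff₀ hn']; linarith
    have hdτ : (d : ℝ) / n ≤ c * τ := by
      have e : (d : ℝ) / n = ((d : ℝ) / ((n : ℝ) * τ)) * τ := by
        field_simp
      rw [e]
      exact mul_le_mul_of_nonneg_right hcd hτ0.le
    have hpartA : q * ∫ ω, (if (n : ℝ) * τ < ∑ i, X i ω then (d : ℝ) / ∑ i, X i ω else 0) ∂μ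
        ≤ 2 * c * τ := by
      calc q * ∫ ω, (if (n : ℝ) * τ < ∑ i, X i ω then (d : ℝ) / ∑ i, X i ω else 0) ∂μ
          ≤ q * (2 * d * ∫ ω, (∑ i, X i ω + 1)⁻¹ ∂μ) := mul_le_mul_of_nonneg_left hIA hq0
        _ = 2 * d * (q * ∫ ω, (∑ i, X i ω + 1)⁻¹ ∂μ) := by ring
        _ ≤ 2 * d * (1 / n) := by
            have h2d : (0:ℝ) ≤ 2 * d := by positivity
            exact mul_le_mul_of_nonneg_left hqI h2d
        _ = 2 * ((d:ℝ) / n) := by ring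
        _ ≤ 2 * (c * τ) := by linarith
        _ = 2 * c * τ := by ring
    -- Part B
    have hpartB : q * ∫ ω, (if (∑ i, X i ω) ≤ (n : ℝ) * τ then (1:ℝ) else 0) ∂μ
        ≤ 3 * c * τ := by
      have hIB0 : 0 ≤ ∫ ω, (if (∑ i, X i ω) ≤ (n : ℝ) * τ then (1:ℝ) else 0) ∂μ :=
        integral_nonneg hB0
      rcases le_or_gt q (3 * τ) with h3 | h3
      · have hIB1 : ∫ ω, (if (∑ i, X i ω) ≤ (n : ℝ) * τ then (1:ℝ) else 0) ∂μ ≤ 1 := by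
          calc _ ≤ ∫ _ω, (1:ℝ) ∂μ := integral_mono int_B (integrable_const 1) hB1
            _ = 1 := by simp
        nlinarith [mul_le_mul_of_nonneg_left hIB1 hq0]
      · set ε := ((n : ℝ) * q - (n : ℝ) * τ) ^ 2 with hεdef
        have hε : 0 < ε := by
          have : (0:ℝ) < (n : ℝ) * q - (n : ℝ) * τ := by nlinarith
          positivity
        have hgm : Measurable (fun ω => ((∑ i, X i ω) - (n : ℝ) * q) ^ 2) :=
          (hSm.sub_const _).pow_const 2
        have int_g : Integrable (fun ω => ((∑ i, X i ω) - (n : ℝ) * q) ^ 2) μ := by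
          refine intg_of_bound μ _ hgm (((n:ℝ) + (n:ℝ) * q) ^ 2) (fun ω => ?_)
          rw [abs_of_nonneg (sq_nonneg _)]
          have h1 := hS0 ω; have h2 := hSn ω
          apply sq_le_sq' <;> nlinarith
        have hgle := aux_var μ X hX hX01 hind q hEX
        have hB2 : ∀ ω, (if (∑ i, X i ω) ≤ (n : ℝ) * τ then (1:ℝ) else 0)
            ≤ ε⁻¹ * ((∑ i, X i ω) - (n : ℝ) * q) ^ 2 := by
          intro ω
          by_cases h : (∑ i, X i ω) ≤ (n : ℝ) * τ
          · rw [if_pos h]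
            have h5 : (n : ℝ) * q - (n : ℝ) * τ ≤ (n : ℝ) * q - ∑ i, X i ω := by linarith
            have hpos : (0:ℝ) ≤ (n : ℝ) * q - (n : ℝ) * τ := by nlinarith
            have hg : ε ≤ ((∑ i, X i ω) - (n : ℝ) * q) ^ 2 := by
              calc ε = ((n : ℝ) * q - (n : ℝ) * τ) ^ 2 := hεdef
                _ ≤ ((n : ℝ) * q - ∑ i, X i ω) ^ 2 := pow_le_pow_left₀ hpos h5 2
                _ = ((∑ i, X i ω) - (n : ℝ) * q) ^ 2 := by ring
            have h6 : 1 ≤ ((∑ i, X i ω) - (n : ℝ) * q) ^ 2 / ε := (one_le_div hε).mpr hg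
            rw [div_eq_mul_inv] at h6
            linarith
          · rw [if_neg h]
            positivity
        have hIB : ∫ ω, (if (∑ i, X i ω) ≤ (n : ℝ) * τ then (1:ℝ) else 0) ∂μ
            ≤ ε⁻¹ * ((n : ℝ) * q) := by
          calc _ ≤ ∫ ω, ε⁻¹ * ((∑ i, X i ω) - (n : ℝ) * q) ^ 2 ∂μ :=
                integral_mono int_B (int_g.const_mul _) hB2
            _ = ε⁻¹ * ∫ ω, ((∑ i, X i ω) - (n : ℝ) * q) ^ 2 ∂μ := integral_const_mul _ _
            _ ≤ ε⁻¹ * ((n : ℝ) * q) :=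
                mul_le_mul_of_nonneg_left hgle (inv_nonneg.mpr hε.le)
        -- key algebraic inequality
        have ha : ((2/3) * q) ^ 2 ≤ (q - τ) ^ 2 :=
          pow_le_pow_left₀ (by positivity) (by linarith) 2
        have hb : ε = ((n:ℝ)) ^ 2 * (q - τ) ^ 2 := by rw [hεdef]; ring
        have hc2 : 3 * τ * ((n:ℝ)) ^ 2 * (((2/3) * q) ^ 2) ≤ 3 * τ * ((n:ℝ)) ^ 2 * ((q - τ) ^ 2) :=
          mul_le_mul_of_nonneg_left ha (by positivity)
        have hc3 : 3 * τ * ((n:ℝ)) ^ 2 * (((2/3) * q) ^ 2)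
            = (4/3) * ((n:ℝ) * τ) * ((n:ℝ) * q ^ 2) := by ring
        have hnq2 : (0:ℝ) ≤ (n:ℝ) * q ^ 2 := by positivity
        have hc4 : (4/3) * ((n:ℝ) * q ^ 2) ≤ (4/3) * ((n:ℝ) * τ) * ((n:ℝ) * q ^ 2) := by
          nlinarith
        have hkey : (n:ℝ) * q ^ 2 ≤ 3 * τ * ε := by
          rw [hb]; nlinarith
        calc q * ∫ ω, (if (∑ i, X i ω) ≤ (n : ℝ) * τ then (1:ℝ) else 0) ∂μ
            ≤ q * (ε⁻¹ * ((n : ℝ) * q)) := mul_le_mul_of_nonneg_left hIB hq0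
          _ = ((n:ℝ) * q ^ 2) * ε⁻¹ := by ring
          _ ≤ (3 * τ * ε) * ε⁻¹ := mul_le_mul_of_nonneg_right hkey (inv_nonneg.mpr hε.le)
          _ = 3 * τ := by field_simp
          _ ≤ 3 * c * τ := by nlinarith
    linarith

/-- Key lemma on pattern frequencies: if `M_1, …, M_n` are i.i.d. with distribution `p` on
`𝓜 = {0,1}^d`, `N_m` is the number of indices `i` with `M_i = m`, and `τ ≥ 1/n`, then
`E[∑_m p_m (d·1_{N_m > nτ}/N_m + 1_{N_m ≤ nτ})] ≤ 5·max(1, d/(nτ))·𝔠_p(τ)`. -/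
theorem pattern_frequency_risk_bound (d n : ℕ) (hd : 0 < d) (hn : 0 < n)
    (p : (Fin d → Bool) → ℝ) (hp0 : ∀ m, 0 ≤ p m) (hp1 : ∑ m, p m = 1)
    (τ : ℝ) (hτ : 1 / (n : ℝ) ≤ τ)
    {Ω : Type*} [MeasurableSpace Ω] (μ : Measure Ω) [IsProbabilityMeasure μ]
    (M : Fin n → Ω → (Fin d → Bool)) (hMmeas : ∀ i, Measurable (M i))
    (hindep : iIndepFun M μ)
    (hdist : ∀ i m, μ {ω | M i ω = m} = ENNReal.ofReal (p m)) :
    (∫ ω, ∑ m, p m *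
        ((if (n : ℝ) * τ < ((Finset.univ.filter (fun i => M i ω = m)).card : ℝ)
            then (d : ℝ) / ((Finset.univ.filter (fun i => M i ω = m)).card : ℝ) else 0) +
          (if ((Finset.univ.filter (fun i => M i ω = m)).card : ℝ) ≤ (n : ℝ) * τ
            then 1 else 0)) ∂μ) ≤
      5 * max 1 ((d : ℝ) / ((n : ℝ) * τ)) * ∑ m, min (p m) τ := by
  classical
  have hn' : (0:ℝ) < n := Nat.cast_pos.mpr hn
  have hτ0 : (0:ℝ) < τ := lt_of_lt_of_le (by positivity) hτ
  have hnτ : 1 ≤ (n : ℝ) * τ := by rw [div_le_iff₀ hn'] at hτ; linarith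
  set X : (Fin d → Bool) → Fin n → Ω → ℝ :=
    fun m i ω => if M i ω = m then 1 else 0 with hXdef
  have hXmeas : ∀ m i, Measurable (X m i) := fun m i =>
    Measurable.ite (hMmeas i (measurableSet_singleton m)) measurable_const measurable_const
  have hX01 : ∀ m i ω, X m i ω = 0 ∨ X m i ω = 1 := by
    intro m i ω; by_cases h : M i ω = m <;> simp [hXdef, h]
  have hXind : ∀ m, iIndepFun (X m) μ := by
    intro m
    exact hindep.comp (fun i b => if b = m then (1:ℝ) else 0)
      (fun i => measurable_of_countable _)
  have hXint : ∀ m i, ∫ ω, X m i ω ∂μ = p m := by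
    intro m i
    have hA : MeasurableSet {ω | M i ω = m} := hMmeas i (measurableSet_singleton m)
    have he : (fun ω => X m i ω) = Set.indicator {ω | M i ω = m} (fun _ => (1:ℝ)) := by
      funext ω
      rw [Set.indicator_apply]
      simp only [hXdef, Set.mem_setOf_eq]
    rw [he, integral_indicator_const (1:ℝ) hA, measureReal_def, hdist i m, smul_eq_mul, mul_one,
      ENNReal.toReal_ofReal (hp0 m)]
  have hcard : ∀ m ω, ((Finset.univ.filter (fun i => M i ω = m)).card : ℝ) = ∑ i, X m i ω := by
    intro m ω
    rw [Finset.card_filter]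
    push_cast
    rfl
  have hSm : ∀ m, Measurable (fun ω => ∑ i, X m i ω) := fun m =>
    Finset.measurable_sum _ (fun i _ => hXmeas m i)
  have hint : ∀ m : Fin d → Bool, Integrable (fun ω => p m *
      ((if (n : ℝ) * τ < ∑ i, X m i ω then (d : ℝ) / ∑ i, X m i ω else 0) +
        (if (∑ i, X m i ω) ≤ (n : ℝ) * τ then 1 else 0))) μ := by
    intro m
    have hm : Measurable (fun ω =>
        (if (n : ℝ) * τ < ∑ i, X m i ω then (d : ℝ) / ∑ i, X m i ω else 0) +
          (if (∑ i, X m i ω) ≤ (n : ℝ) * τ then 1 else 0)) :=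
      (Measurable.ite (measurableSet_lt measurable_const (hSm m))
        (measurable_const.div (hSm m)) measurable_const).add
        (Measurable.ite (measurableSet_le (hSm m) measurable_const) measurable_const
          measurable_const)
    refine (intg_of_bound μ _ hm ((d:ℝ) + 1) (fun ω => ?_)).const_mul _
    have hS0 : (0:ℝ) ≤ ∑ i, X m i ω :=
      Finset.sum_nonneg (fun i _ => by rcases hX01 m i ω with h | h <;> simp [h])
    have hA0 : 0 ≤ (if (n : ℝ) * τ < ∑ i, X m i ω then (d : ℝ) / ∑ i, X m i ω else 0) := by
      split_ifs with h
      · exact div_nonneg (Nat.cast_nonneg d) hS0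
      · exact le_rfl
    have hAd : (if (n : ℝ) * τ < ∑ i, X m i ω then (d : ℝ) / ∑ i, X m i ω else 0) ≤ d := by
      split_ifs with h
      · exact div_le_self (Nat.cast_nonneg d) (le_trans hnτ h.le)
      · exact Nat.cast_nonneg d
    have hB0 : (0:ℝ) ≤ (if (∑ i, X m i ω) ≤ (n : ℝ) * τ then (1:ℝ) else 0) := by
      split_ifs <;> norm_num
    have hB1 : (if (∑ i, X m i ω) ≤ (n : ℝ) * τ then (1:ℝ) else 0) ≤ 1 := by
      split_ifs <;> norm_num
    rw [abs_le]
    constructor <;> linarith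
  calc (∫ ω, ∑ m, p m *
        ((if (n : ℝ) * τ < ((Finset.univ.filter (fun i => M i ω = m)).card : ℝ)
            then (d : ℝ) / ((Finset.univ.filter (fun i => M i ω = m)).card : ℝ) else 0) +
          (if ((Finset.univ.filter (fun i => M i ω = m)).card : ℝ) ≤ (n : ℝ) * τ
            then 1 else 0)) ∂μ)
      = ∫ ω, ∑ m, p m *
        ((if (n : ℝ) * τ < ∑ i, X m i ω then (d : ℝ) / ∑ i, X m i ω else 0) +
          (if (∑ i, X m i ω) ≤ (n : ℝ) * τ then 1 else 0)) ∂μ := by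
        refine integral_congr_ae (ae_of_all _ (fun ω => ?_))
        refine Finset.sum_congr rfl (fun m _ => ?_)
        rw [hcard m ω]
    _ = ∑ m, ∫ ω, p m *
        ((if (n : ℝ) * τ < ∑ i, X m i ω then (d : ℝ) / ∑ i, X m i ω else 0) +
          (if (∑ i, X m i ω) ≤ (n : ℝ) * τ then 1 else 0)) ∂μ :=
        integral_finset_sum _ (fun m _ => hint m)
    _ = ∑ m, p m * ∫ ω,
        ((if (n : ℝ) * τ < ∑ i, X m i ω then (d : ℝ) / ∑ i, X m i ω else 0) +
          (if (∑ i, X m i ω) ≤ (n : ℝ) * τ then 1 else 0)) ∂μ :=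
        Finset.sum_congr rfl (fun m _ => integral_const_mul _ _)
    _ ≤ ∑ m, 5 * max 1 ((d : ℝ) / ((n : ℝ) * τ)) * min (p m) τ :=
        Finset.sum_le_sum (fun m _ => per_pattern μ d hn τ hτ (X m) (hXmeas m) (hX01 m)
          (hXind m) (p m) (hXint m))
    _ = 5 * max 1 ((d : ℝ) / ((n : ℝ) * τ)) * ∑ m, min (p m) τ := by
        rw [Finset.mul_sum]
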